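/- (Lemma 2, part (prop_6.2).) Fix ε_ν ∈ (0,1), and suppose the segmentation used for estimation equals the true segmentation R°, with every region of R° nonempty and Assumptions 1 and 2 in force. For each n and each admissible pair (ν_d, ν_u), let μ̂_n(ν_d, ν_u) ∈ Θ(R°) be a maximizer of μ ↦ Σ_{t=⌊n·ν_d⌋+1}^{⌊n·ν_u⌋} l((R°,μ); X_t) over Θ(R°). Then almost surely, sup over all admissible pairs (ν_d, ν_u) of ‖μ̂_n(ν_d,ν_u) − μ°‖ → 0 as n → ∞. -/

import Mathlib

open MeasureTheory ProbabilityTheory Filter Topology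

/-- The reduced Poisson log-likelihood of a count array `x` under segmentation `R`
and rates `μ`: `l((R,μ); x) = Σ_w Σ_i (x(i,w)·log μ(R i, w) − μ(R i, w))`. -/
noncomputable def loglik {NI NW m : ℕ} (R : Fin NI → Fin m)
    (μ : Fin m × Fin NW → ℝ) (x : Fin NI × Fin NW → ℕ) : ℝ :=
  ∑ w : Fin NW, ∑ i : Fin NI, ((x (i, w) : ℝ) * Real.log (μ (R i, w)) - μ (R i, w))

/-- Gradient of `l((R,μ); x)` in `μ`: its `(h,w)` entry is
`Σ_{i : R i = h} (x(i,w)/μ(h,w) − 1)`. -/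
noncomputable def loglikGrad {NI NW m : ℕ} (R : Fin NI → Fin m)
    (μ : Fin m × Fin NW → ℝ) (x : Fin NI × Fin NW → ℕ) :
    Fin m × Fin NW → ℝ :=
  fun hw => ∑ i : Fin NI,
    if R i = hw.1 then ((x (i, hw.2) : ℝ) / μ hw - 1) else 0

/-- Diagonal of the Hessian of `l((R,μ); x)` in `μ`: its `(h,w)` entry is
`−Σ_{i : R i = h} x(i,w)/μ(h,w)²`. -/
noncomputable def loglikHess {NI NW m : ℕ} (R : Fin NI → Fin m)
    (μ : Fin m × Fin NW → ℝ) (x : Fin NI × Fin NW → ℕ) :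
    Fin m × Fin NW → ℝ :=
  fun hw => -∑ i : Fin NI,
    if R i = hw.1 then (x (i, hw.2) : ℝ) / (μ hw) ^ 2 else 0

/-- The expected log-likelihood `L(R,μ)` when the true per-pixel rates are
`λ°(i,w) = μ°(R° i, w)`. -/
noncomputable def expLoglik {NI NW m0 m : ℕ} (R0 : Fin NI → Fin m0)
    (μ0 : Fin m0 × Fin NW → ℝ) (R : Fin NI → Fin m) (μ : Fin m × Fin NW → ℝ) : ℝ :=
  ∑ w : Fin NW, ∑ i : Fin NI, (μ0 (R0 i, w) * Real.log (μ (R i, w)) - μ (R i, w))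

/-- Gradient of `L(R,μ)` in `μ`. -/
noncomputable def expLoglikGrad {NI NW m0 m : ℕ} (R0 : Fin NI → Fin m0)
    (μ0 : Fin m0 × Fin NW → ℝ) (R : Fin NI → Fin m) (μ : Fin m × Fin NW → ℝ) :
    Fin m × Fin NW → ℝ :=
  fun hw => ∑ i : Fin NI,
    if R i = hw.1 then (μ0 (R0 i, hw.2) / μ hw - 1) else 0

/-- Diagonal of the Hessian of `L(R,μ)` in `μ`. -/
noncomputable def expLoglikHess {NI NW m0 m : ℕ} (R0 : Fin NI → Fin m0)
    (μ0 : Fin m0 × Fin NW → ℝ) (R : Fin NI → Fin m) (μ : Fin m × Fin NW → ℝ) :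
    Fin m × Fin NW → ℝ :=
  fun hw => -∑ i : Fin NI,
    if R i = hw.1 then μ0 (R0 i, hw.2) / (μ hw) ^ 2 else 0

/-- The compact parameter box `Θ(R) = [C_d, C_u]^(Fin m × Fin N_W)`. -/
def Theta (Cd Cu : ℝ) (m NW : ℕ) : Set (Fin m × Fin NW → ℝ) :=
  {μ | ∀ p, μ p ∈ Set.Icc Cd Cu}

/-- An admissible pair of normalized endpoints: `0 ≤ ν_d < ν_u ≤ 1` with
`ν_u − ν_d > ε_ν`. -/
def AdmPair (epsnu : ℝ) : Type :=
  {q : ℝ × ℝ // 0 ≤ q.1 ∧ q.1 < q.2 ∧ q.2 ≤ 1 ∧ epsnu < q.2 - q.1}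

/-- Regions `p` and `q` of the segmentation `R` are neighbouring: some graph edge
joins a pixel of `R⁻¹(p)` to a pixel of `R⁻¹(q)`. -/
def Neighbouring {NI m : ℕ} (G : SimpleGraph (Fin NI)) (R : Fin NI → Fin m)
    (p q : Fin m) : Prop :=
  ∃ i j, G.Adj i j ∧ R i = p ∧ R j = q

open scoped NNReal ENNReal

lemma my_poisson_hasSum (r : ℝ≥0) :
    HasSum (fun n : ℕ => (n : ℝ) * poissonPMFReal r n) r := by
  have h2 : ∀ n : ℕ, ((n + 1 : ℕ) : ℝ) * poissonPMFReal r (n + 1)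
      = (r : ℝ) * poissonPMFReal r n := by
    intro n
    unfold poissonPMFReal
    rw [Nat.factorial_succ]
    have h1 : (Nat.factorial n : ℝ) ≠ 0 := Nat.cast_ne_zero.2 (Nat.factorial_ne_zero n)
    field_simp
    push_cast; ring
  have heq : (fun n : ℕ => ((n + 1 : ℕ) : ℝ) * poissonPMFReal r (n + 1))
      = fun n : ℕ => (r : ℝ) * poissonPMFReal r n := funext h2
  have hval : (↑r : ℝ) - ∑ i ∈ Finset.range 1, (i : ℝ) * poissonPMFReal r i = ↑r := by simp
  refine (hasSum_nat_add_iff' (f := fun n : ℕ => (n : ℝ) * poissonPMFReal r n) 1).mp ?_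
  rw [show (fun n : ℕ => ((n + 1 : ℕ) : ℝ) * poissonPMFReal r (n + 1))
      = fun n : ℕ => (r : ℝ) * poissonPMFReal r n from funext h2] at *
  rw [hval]
  simpa [poissonPMFReal] using (poissonPMFRealSum r).mul_left (r : ℝ)

lemma my_poisson_integrable (r : ℝ≥0) :
    Integrable (fun n : ℕ => (n : ℝ)) (poissonMeasure r) := by
  constructor
  · exact measurable_from_top.aestronglyMeasurable
  · rw [hasFiniteIntegral_iff_norm, lintegral_countable']
    have key : ∀ n : ℕ, ENNReal.ofReal ‖(n : ℝ)‖ * (poissonMeasure r) {n}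
        = ENNReal.ofReal ((n : ℝ) * poissonPMFReal r n) := by
      intro n
      have h1 : (poissonMeasure r) {n} = ENNReal.ofReal (poissonPMFReal r n) :=
        by rw [poissonMeasure_singleton]; rfl
      rw [h1, ← ENNReal.ofReal_mul (by positivity)]
      congr 1
      rw [Real.norm_natCast]
    simp only [key]
    rw [← ENNReal.ofReal_tsum_of_nonneg
      (fun n => mul_nonneg (Nat.cast_nonneg n) poissonPMFReal_nonneg)
      (my_poisson_hasSum r).summable]
    exact ENNReal.ofReal_lt_top

lemma my_poisson_integral (r : ℝ≥0) :
    ∫ n : ℕ, (n : ℝ) ∂(poissonMeasure r) = r := by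
  rw [integral_countable' (my_poisson_integrable r)]
  have key : ∀ n : ℕ, (poissonMeasure r).real {n} • (n : ℝ)
      = (n : ℝ) * poissonPMFReal r n := by
    intro n
    have h1 : (poissonMeasure r) {n} = ENNReal.ofReal (poissonPMFReal r n) :=
      by rw [poissonMeasure_singleton]; rfl
    rw [measureReal_def, h1, ENNReal.toReal_ofReal poissonPMFReal_nonneg, smul_eq_mul, mul_comm]
  rw [tsum_congr key]
  exact (my_poisson_hasSum r).tsum_eq

lemma my_clamp_lipschitz (a b x y : ℝ) :
    |max a (min b x) - max a (min b y)| ≤ |x - y| := by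
  simp only [max_def, min_def]
  split_ifs <;> rw [abs_sub_le_iff] <;>
    constructor <;> linarith [le_abs_self (x - y), neg_abs_le (x - y), abs_nonneg (x - y)]

lemma my_scalar_argmax {S K Cd Cu m : ℝ} (hS : 0 ≤ S) (hK : 0 < K) (hCd : 0 < Cd)
    (hCdCu : Cd ≤ Cu) (hm : m ∈ Set.Icc Cd Cu)
    (hmax : ∀ c ∈ Set.Icc Cd Cu, S * Real.log c - K * c ≤ S * Real.log m - K * m) :
    m = max Cd (min Cu (S / K)) := by
  set M := S / K with hM
  set cs := max Cd (min Cu M) with hcs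
  have hM0 : 0 ≤ M := div_nonneg hS hK.le
  have hcs_mem : cs ∈ Set.Icc Cd Cu := by
    constructor
    · exact le_max_left _ _
    · exact max_le hCdCu (min_le_left _ _)
  have hcs_pos : 0 < cs := lt_of_lt_of_le hCd hcs_mem.1
  by_contra hne
  have hmpos : 0 < m := lt_of_lt_of_le hCd hm.1
  have hratio : m / cs ≠ 1 := by
    intro h
    exact hne (by field_simp at h; linarith)
  have hlog : Real.log (m / cs) < m / cs - 1 :=
    Real.log_lt_sub_one_of_pos (by positivity) hratio
  have hlogdiv : Real.log (m / cs) = Real.log m - Real.log cs :=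
    Real.log_div (ne_of_gt hmpos) (ne_of_gt hcs_pos)
  have hSKM : S = K * M := by rw [hM, mul_div_assoc', mul_div_cancel_left₀ S hK.ne']
  have hcontr : S * Real.log m - K * m < S * Real.log cs - K * cs := by
    rcases eq_or_lt_of_le hS with hS0 | hSpos
    · have hMz : M = 0 := by rw [hM, ← hS0]; simp
      have hcsCd : cs = Cd := by
        rw [hcs, hMz]
        rw [min_eq_right (le_trans hCd.le hCdCu)]
        exact max_eq_left hCd.le
      have hmgt : Cd < m := lt_of_le_of_ne hm.1 (fun h => hne (by rw [← h, hcsCd]))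
      rw [← hS0, hcsCd]
      simp only [zero_mul, zero_sub]
      exact neg_lt_neg (by nlinarith)
    · have hMpos : 0 < M := div_pos hSpos hK
      have h1 : S * (Real.log m - Real.log cs) < K * M * (m / cs - 1) := by
        rw [← hlogdiv, hSKM]
        exact mul_lt_mul_of_pos_left hlog (by positivity)
      have h3 : M * (m - cs) ≤ cs * (m - cs) := by
        rcases le_or_gt m cs with hmc | hmc
        · have hcsM : cs ≤ M := by
            rcases lt_or_ge M Cu with h | h
            · have hmin : min Cu M = M := min_eq_right h.le
              rw [hcs, hmin]
              rcases le_or_gt M Cd with h' | h'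
              · exfalso
                have hcd : cs = Cd := by rw [hcs, hmin]; exact max_eq_left h'
                exact hne (le_antisymm (hcd ▸ hmc) (hcd ▸ hm.1))
              · exact le_of_eq (max_eq_right h'.le)
            · calc cs ≤ Cu := hcs_mem.2
                _ ≤ M := h
          nlinarith
        · have hMcs : M ≤ cs := by
            rcases le_or_gt M Cu with h | h
            · rw [hcs, min_eq_right h]
              exact le_max_right _ _
            · exfalso
              have hcu : cs = Cu := by
                rw [hcs, min_eq_left h.le]
                exact max_eq_right hCdCu
              exact absurd hm.2 (by rw [← hcu]; exact not_le.mpr hmc)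
          nlinarith
      have h2 : K * M * (m / cs - 1) ≤ K * (m - cs) := by
        have hdk : M * (m / cs - 1) ≤ m - cs := by
          rw [show m / cs - 1 = (m - cs) / cs from by
            rw [sub_div, div_self (ne_of_gt hcs_pos)], mul_div_assoc']
          refine (div_le_iff₀ hcs_pos).mpr ?_
          nlinarith
        nlinarith
      nlinarith [h1, h2]
  exact absurd (hmax cs hcs_mem) (not_le.mpr hcontr)

lemma my_unif_dev {s : ℕ → ℝ} {L : ℝ}
    (h : Filter.Tendsto (fun n : ℕ => s n / n) atTop (nhds L)) {δ : ℝ} (hδ : 0 < δ) :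
    ∀ᶠ n : ℕ in atTop, ∀ k ≤ n, |s k - k * L| ≤ δ * n := by
  obtain ⟨N, hN⟩ := Metric.tendsto_atTop.mp h (δ / 2) (by linarith)
  set C := ∑ k ∈ Finset.range (N + 1), |s k - k * L| with hCdef
  have hC : ∀ k ≤ N, |s k - k * L| ≤ C := by
    intro k hk
    exact Finset.single_le_sum (f := fun k => |s k - k * L|) (fun i _ => abs_nonneg _)
      (Finset.mem_range.mpr (Nat.lt_succ_of_le hk))
  have hev : ∀ᶠ n : ℕ in atTop, C ≤ δ / 2 * n := by
    have ht : Filter.Tendsto (fun n : ℕ => δ / 2 * (n : ℝ)) atTop atTop :=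
      (tendsto_natCast_atTop_atTop (R := ℝ)).const_mul_atTop (by linarith)
    exact ht.eventually_ge_atTop C
  filter_upwards [hev, eventually_ge_atTop N] with n hn1 hn2 k hk
  have hn0 : (0 : ℝ) ≤ n := Nat.cast_nonneg n
  rcases le_or_gt k N with h' | h'
  · calc |s k - k * L| ≤ C := hC k h'
      _ ≤ δ / 2 * n := hn1
      _ ≤ δ * n := by nlinarith
  · have hk0 : 0 < k := by omega
    have hkpos : (0 : ℝ) < k := by exact_mod_cast hk0
    have hd := hN k (by omega)
    rw [Real.dist_eq] at hd
    have hkey : |s k - k * L| < δ / 2 * k := by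
      have h4 : s k / k - L = (s k - k * L) / k := by field_simp
      calc |s k - k * L| = |s k / k - L| * k := by
            rw [h4, abs_div, abs_of_pos hkpos, div_mul_cancel₀ _ (ne_of_gt hkpos)]
        _ < δ / 2 * k := mul_lt_mul_of_pos_right hd hkpos
    have hkn : (k : ℝ) ≤ n := Nat.cast_le.mpr hk
    nlinarith

lemma my_loglik_update {NI NW m : ℕ} (R : Fin NI → Fin m) (μ : Fin m × Fin NW → ℝ)
    (x : Fin NI × Fin NW → ℕ) (h : Fin m) (w : Fin NW) (c : ℝ) :
    loglik R (Function.update μ (h, w) c) x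
      = loglik R μ x
        + ((∑ i ∈ Finset.univ.filter (fun i => R i = h), (x (i, w) : ℝ))
            * (Real.log c - Real.log (μ (h, w)))
          - ((Finset.univ.filter (fun i : Fin NI => R i = h)).card : ℝ) * (c - μ (h, w))) := by
  have key : ∀ (w' : Fin NW) (i : Fin NI),
      (x (i, w') : ℝ) * Real.log (Function.update μ (h, w) c (R i, w'))
        - Function.update μ (h, w) c (R i, w')
      = ((x (i, w') : ℝ) * Real.log (μ (R i, w')) - μ (R i, w'))
        + (if w' = w then (if R i = h then
            ((x (i, w') : ℝ) * (Real.log c - Real.log (μ (h, w))) - (c - μ (h, w)))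
            else 0) else 0) := by
    intro w' i
    rw [Function.update_apply]
    by_cases hc : (R i, w') = (h, w)
    · rw [Prod.mk.injEq] at hc
      obtain ⟨h1, h2⟩ := hc
      rw [if_pos (by rw [Prod.mk.injEq]; exact ⟨h1, h2⟩), if_pos h2, if_pos h1, h1, h2]
      ring
    · rw [Prod.mk.injEq] at hc
      rw [if_neg (by rw [Prod.mk.injEq]; exact hc)]
      by_cases h2 : w' = w
      · rw [if_pos h2, if_neg (fun h1 => hc ⟨h1, h2⟩)]
        ring
      · rw [if_neg h2]
        ring
  unfold loglik
  simp only [key]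
  rw [Finset.sum_congr rfl (fun w' _ => Finset.sum_add_distrib), Finset.sum_add_distrib]
  congr 1
  have step1 : ∀ w' : Fin NW,
      (∑ i : Fin NI, if w' = w then (if R i = h then
          ((x (i, w') : ℝ) * (Real.log c - Real.log (μ (h, w))) - (c - μ (h, w))) else 0) else 0)
      = if w' = w then (∑ i : Fin NI, if R i = h then
          ((x (i, w') : ℝ) * (Real.log c - Real.log (μ (h, w))) - (c - μ (h, w))) else 0) else 0 := by
    intro w'
    by_cases h2 : w' = w <;> simp [h2]
  rw [Finset.sum_congr rfl (fun w' _ => step1 w')]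
  rw [Finset.sum_ite_eq' Finset.univ w]
  rw [if_pos (Finset.mem_univ w)]
  rw [← Finset.sum_filter]
  rw [Finset.sum_sub_distrib, ← Finset.sum_mul, Finset.sum_const, nsmul_eq_mul]

set_option maxHeartbeats 1600000

/-- Lemma 2, part (prop_6.2): when the true segmentation `R°` is used for
estimation, the maximizer `μ̂_n(ν_d,ν_u)` of the partial-sum log-likelihood over
`Θ(R°)` converges almost surely to the true rates `μ°`, uniformly over all
admissible pairs `(ν_d, ν_u)`. -/
theorem lemma2_prop_6_2
    {NI NW m0 : ℕ} (G : SimpleGraph (Fin NI))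
    (Cd Cu : ℝ) (hCd : 0 < Cd) (hCdCu : Cd ≤ Cu)
    (epsnu : ℝ) (hepsnu : 0 < epsnu ∧ epsnu < 1)
    (R0 : Fin NI → Fin m0) (hR0surj : ∀ h, ∃ i, R0 i = h)
    (μ0 : Fin m0 × Fin NW → ℝ)
    -- Assumption 1
    (hA1 : ∀ p, μ0 p ∈ Set.Icc Cd Cu)
    -- Assumption 2
    (hA2 : ∀ p q, p ≠ q → Neighbouring G R0 p q → ∀ w, μ0 (p, w) ≠ μ0 (q, w))
    {Ω : Type*} [MeasurableSpace Ω] (Pr : Measure Ω) [IsProbabilityMeasure Pr]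
    (X : ℕ → Ω → Fin NI × Fin NW → ℕ)
    (hmeas : ∀ t p, Measurable fun ω => X t ω p)
    (hindep : iIndepFun (fun (q : ℕ × (Fin NI × Fin NW)) ω => X q.1 ω q.2) Pr)
    (hlaw : ∀ t p, Measure.map (fun ω => X t ω p) Pr
      = poissonMeasure (μ0 (R0 p.1, p.2)).toNNReal)
    -- the (random) maximizer of the partial-sum log-likelihood over Θ(R°)
    (μhat : ℕ → AdmPair epsnu → Ω → (Fin m0 × Fin NW → ℝ))
    (hμhat_mem : ∀ n q ω, μhat n q ω ∈ Theta Cd Cu m0 NW)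
    (hμhat_max : ∀ (n : ℕ) (q : AdmPair epsnu) (ω : Ω),
      ∀ μ ∈ Theta Cd Cu m0 NW,
        ∑ t ∈ Finset.Ioc ⌊(n : ℝ) * q.1.1⌋₊ ⌊(n : ℝ) * q.1.2⌋₊, loglik R0 μ (X t ω)
          ≤ ∑ t ∈ Finset.Ioc ⌊(n : ℝ) * q.1.1⌋₊ ⌊(n : ℝ) * q.1.2⌋₊,
              loglik R0 (μhat n q ω) (X t ω)) :
    ∀ᵐ ω ∂Pr,
      Tendsto (fun n : ℕ => ⨆ q : AdmPair epsnu, ‖μhat n q ω - μ0‖)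
        atTop (𝓝 0) := by
  classical
  have hq0 : AdmPair epsnu := ⟨(0, 1), le_refl 0, one_pos, le_refl 1, by simpa using hepsnu.2⟩
  haveI hne : Nonempty (AdmPair epsnu) := ⟨hq0⟩
  -- Step 1: SLLN for each pixel-band pair
  have slln : ∀ p : Fin NI × Fin NW, ∀ᵐ ω ∂Pr,
      Tendsto (fun n : ℕ => (∑ t ∈ Finset.range n, (X t ω p : ℝ)) / n) atTop
        (𝓝 (μ0 (R0 p.1, p.2))) := by
    intro p
    have hpos : (0 : ℝ) < μ0 (R0 p.1, p.2) := lt_of_lt_of_le hCd (hA1 _).1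
    have hcast : ∀ t, Measurable (fun ω => ((X t ω p : ℕ) : ℝ)) :=
      fun t => measurable_from_top.comp (hmeas t p)
    have hmap : Integrable (fun k : ℕ => (k : ℝ)) (Measure.map (fun ω => X 0 ω p) Pr) := by
      rw [hlaw 0 p]; exact my_poisson_integrable _
    have hint : Integrable (fun ω => ((X 0 ω p : ℕ) : ℝ)) Pr :=
      (integrable_map_measure measurable_from_top.aestronglyMeasurable
        (hmeas 0 p).aemeasurable).mp hmap
    have hindep2 : Pairwise (Function.onFun (IndepFun · · Pr) fun t ω => ((X t ω p : ℕ) : ℝ)) := by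
      intro s t hst
      exact (hindep.indepFun (show ((s, p) : ℕ × (Fin NI × Fin NW)) ≠ (t, p) by
        simp [Prod.ext_iff, hst])).comp measurable_from_top measurable_from_top
    have hident : ∀ t, IdentDistrib (fun ω => ((X t ω p : ℕ) : ℝ))
        (fun ω => ((X 0 ω p : ℕ) : ℝ)) Pr Pr := by
      intro t
      refine ⟨(hcast t).aemeasurable, (hcast 0).aemeasurable, ?_⟩
      show Measure.map ((fun k : ℕ => (k : ℝ)) ∘ (fun ω => X t ω p)) Pr
        = Measure.map ((fun k : ℕ => (k : ℝ)) ∘ (fun ω => X 0 ω p)) Pr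
      rw [← Measure.map_map measurable_from_top (hmeas t p),
        ← Measure.map_map measurable_from_top (hmeas 0 p), hlaw t p, hlaw 0 p]
    have hexp : (∫ ω, ((X 0 ω p : ℕ) : ℝ) ∂Pr) = μ0 (R0 p.1, p.2) := by
      have h7 := integral_map (φ := fun ω => X 0 ω p) (μ := Pr)
        (f := fun k : ℕ => (k : ℝ)) (hmeas 0 p).aemeasurable
        measurable_from_top.aestronglyMeasurable
      rw [hlaw 0 p, my_poisson_integral] at h7
      rw [← h7, Real.coe_toNNReal _ hpos.le]
    have h8 := strong_law_ae_real (fun t ω => ((X t ω p : ℕ) : ℝ)) hint hindep2 hident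
    rw [hexp] at h8
    exact h8
  have hae : ∀ᵐ ω ∂Pr, ∀ p : Fin NI × Fin NW,
      Tendsto (fun n : ℕ => (∑ t ∈ Finset.range n, (X t ω p : ℝ)) / n) atTop
        (𝓝 (μ0 (R0 p.1, p.2))) := ae_all_iff.mpr slln
  filter_upwards [hae] with ω hω
  -- Step 2: deterministic part
  suffices key : ∀ ε > (0 : ℝ), ∀ᶠ n : ℕ in atTop,
      ∀ q : AdmPair epsnu, ‖μhat n q ω - μ0‖ ≤ ε by
    rw [Metric.tendsto_atTop]
    intro ε hε
    obtain ⟨N, hN⟩ := eventually_atTop.mp (key (ε / 2) (by linarith))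
    refine ⟨N, fun n hn => ?_⟩
    have hb : ∀ q : AdmPair epsnu, ‖μhat n q ω - μ0‖ ≤ ε / 2 := hN n hn
    have hbdd : BddAbove (Set.range fun q : AdmPair epsnu => ‖μhat n q ω - μ0‖) :=
      ⟨ε / 2, by rintro y ⟨q, rfl⟩; exact hb q⟩
    have h1 : (⨆ q : AdmPair epsnu, ‖μhat n q ω - μ0‖) ≤ ε / 2 := ciSup_le hb
    have h2 : (0 : ℝ) ≤ ⨆ q : AdmPair epsnu, ‖μhat n q ω - μ0‖ :=
      le_trans (norm_nonneg _) (le_ciSup hbdd hq0)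
    rw [Real.dist_eq, sub_zero, abs_of_nonneg h2]
    linarith
  intro ε hε
  set δ := ε * epsnu / 16 with hδdef
  have hδ : 0 < δ := by
    rw [hδdef]; exact div_pos (mul_pos hε hepsnu.1) (by norm_num)
  have hdev : ∀ᶠ n : ℕ in atTop, ∀ p : Fin NI × Fin NW, ∀ k ≤ n,
      |(∑ t ∈ Finset.range k, (X t ω p : ℝ)) - k * μ0 (R0 p.1, p.2)| ≤ δ * n :=
    eventually_all.mpr (fun p => my_unif_dev (hω p) hδ)
  have hdev1 : ∀ᶠ n : ℕ in atTop, ∀ p : Fin NI × Fin NW, ∀ k ≤ n + 1,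
      |(∑ t ∈ Finset.range k, (X t ω p : ℝ)) - k * μ0 (R0 p.1, p.2)| ≤ δ * (n + 1 : ℕ) :=
    (tendsto_add_atTop_nat 1).eventually hdev
  have hlarge : ∀ᶠ n : ℕ in atTop, (4 : ℝ) ≤ (n : ℝ) * epsnu :=
    ((tendsto_natCast_atTop_atTop (R := ℝ)).atTop_mul_const hepsnu.1).eventually_ge_atTop 4
  filter_upwards [hdev1, hlarge, eventually_ge_atTop 1] with n hdevn hlargen hn1n
  intro q
  have hq := q.2
  obtain ⟨hq1, hq2, hq3, hq4⟩ := hq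
  have hnR : (1 : ℝ) ≤ (n : ℝ) := by exact_mod_cast hn1n
  set a := ⌊(n : ℝ) * q.1.1⌋₊ with ha
  set b := ⌊(n : ℝ) * q.1.2⌋₊ with hb
  have hb_le_n : b ≤ n := by
    have h9 : (n : ℝ) * q.1.2 ≤ ((n : ℕ) : ℝ) := by nlinarith
    calc b ≤ ⌊((n : ℕ) : ℝ)⌋₊ := Nat.floor_le_floor h9
      _ = n := Nat.floor_natCast n
  have ha_le : (a : ℝ) ≤ (n : ℝ) * q.1.1 :=
    Nat.floor_le (mul_nonneg (by linarith) hq1)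
  have hb_gt : (n : ℝ) * q.1.2 < (b : ℝ) + 1 := Nat.lt_floor_add_one _
  have hprod : (n : ℝ) * epsnu < (n : ℝ) * (q.1.2 - q.1.1) :=
    mul_lt_mul_of_pos_left hq4 (by linarith)
  have hgap : (n : ℝ) * epsnu - 1 < (b : ℝ) - (a : ℝ) := by nlinarith
  have hT2 : (n : ℝ) * epsnu / 2 ≤ (b : ℝ) - (a : ℝ) := by linarith
  have hTpos : (0 : ℝ) < (b : ℝ) - (a : ℝ) := by linarith
  have hab : a < b := by exact_mod_cast (show (a : ℝ) < (b : ℝ) by linarith)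
  have hTcast : ((b - a : ℕ) : ℝ) = (b : ℝ) - (a : ℝ) := by
    rw [Nat.cast_sub hab.le]
  rw [pi_norm_le_iff_of_nonneg hε.le]
  rintro ⟨h, w⟩
  have hK0 : 0 < (Finset.univ.filter (fun i : Fin NI => R0 i = h)).card := by
    obtain ⟨i, hi⟩ := hR0surj h
    exact Finset.card_pos.mpr ⟨i, by simp [hi]⟩
  have hK0R : (0 : ℝ) < ((Finset.univ.filter (fun i : Fin NI => R0 i = h)).card : ℝ) := by
    exact_mod_cast hK0
  have hKT : (0 : ℝ) < ((Finset.univ.filter (fun i : Fin NI => R0 i = h)).card : ℝ)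
      * ((b - a : ℕ) : ℝ) := by
    rw [hTcast]; exact mul_pos hK0R hTpos
  -- the maximizer property in coordinate (h, w)
  have hmax1 : ∀ c ∈ Set.Icc Cd Cu,
      (∑ t ∈ Finset.Ioc a b, ∑ i ∈ Finset.univ.filter (fun i : Fin NI => R0 i = h),
          (X t ω (i, w) : ℝ)) * Real.log c
        - (((Finset.univ.filter (fun i : Fin NI => R0 i = h)).card : ℝ)
            * ((b - a : ℕ) : ℝ)) * c
      ≤ (∑ t ∈ Finset.Ioc a b, ∑ i ∈ Finset.univ.filter (fun i : Fin NI => R0 i = h),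
          (X t ω (i, w) : ℝ)) * Real.log (μhat n q ω (h, w))
        - (((Finset.univ.filter (fun i : Fin NI => R0 i = h)).card : ℝ)
            * ((b - a : ℕ) : ℝ)) * μhat n q ω (h, w) := by
    intro c hc
    have hupd : Function.update (μhat n q ω) (h, w) c ∈ Theta Cd Cu m0 NW := by
      intro p'
      rw [Function.update_apply]
      split_ifs
      · exact hc
      · exact hμhat_mem n q ω p'
    have h5 := hμhat_max n q ω _ hupd
    rw [← ha, ← hb] at h5
    rw [Finset.sum_congr (rfl : Finset.Ioc a b = Finset.Ioc a b)
      (fun t _ => my_loglik_update R0 (μhat n q ω) (X t ω) h w c),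
      Finset.sum_add_distrib] at h5
    have h6 : ∑ t ∈ Finset.Ioc a b,
        ((∑ i ∈ Finset.univ.filter (fun i : Fin NI => R0 i = h), (X t ω (i, w) : ℝ))
            * (Real.log c - Real.log (μhat n q ω (h, w)))
          - ((Finset.univ.filter (fun i : Fin NI => R0 i = h)).card : ℝ)
            * (c - μhat n q ω (h, w))) ≤ 0 := by linarith
    rw [Finset.sum_sub_distrib, ← Finset.sum_mul, Finset.sum_const, nsmul_eq_mul,
      Nat.card_Ioc] at h6
    ring_nf at h6 ⊢
    linarith
  have hμeq : μhat n q ω (h, w) = max Cd (min Cu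
      ((∑ t ∈ Finset.Ioc a b, ∑ i ∈ Finset.univ.filter (fun i : Fin NI => R0 i = h),
          (X t ω (i, w) : ℝ))
        / (((Finset.univ.filter (fun i : Fin NI => R0 i = h)).card : ℝ)
            * ((b - a : ℕ) : ℝ)))) :=
    my_scalar_argmax
      (Finset.sum_nonneg fun t _ => Finset.sum_nonneg fun i _ => Nat.cast_nonneg _)
      hKT hCd hCdCu (hμhat_mem n q ω (h, w)) hmax1
  -- deviation bound on the empirical mean
  have hIoc : ∀ i ∈ Finset.univ.filter (fun i : Fin NI => R0 i = h),
      |(∑ t ∈ Finset.Ioc a b, (X t ω (i, w) : ℝ)) - ((b : ℝ) - (a : ℝ)) * μ0 (h, w)|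
        ≤ 2 * (δ * ((n : ℝ) + 1)) := by
    intro i hi
    have hRi : R0 i = h := by simpa using hi
    have e1 : (∑ t ∈ Finset.Ioc a b, (X t ω (i, w) : ℝ))
        = (∑ t ∈ Finset.range (b + 1), (X t ω (i, w) : ℝ))
          - ∑ t ∈ Finset.range (a + 1), (X t ω (i, w) : ℝ) := by
      have hset : Finset.Ioc a b = Finset.range (b + 1) \ Finset.range (a + 1) := by
        ext t
        simp only [Finset.mem_Ioc, Finset.mem_sdiff, Finset.mem_range]
        omega
      rw [hset, Finset.sum_sdiff_eq_sub]
      intro t ht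
      simp only [Finset.mem_range] at ht ⊢
      omega
    have d1 := hdevn (i, w) (b + 1) (by omega)
    have d2 := hdevn (i, w) (a + 1) (by omega)
    dsimp only at d1 d2
    rw [hRi] at d1 d2
    rw [e1]
    have hc1 : ((b + 1 : ℕ) : ℝ) = (b : ℝ) + 1 := by push_cast; ring
    have hc2 : ((a + 1 : ℕ) : ℝ) = (a : ℝ) + 1 := by push_cast; ring
    have hc3 : ((n + 1 : ℕ) : ℝ) = (n : ℝ) + 1 := by push_cast; ring
    rw [hc1] at d1
    rw [hc2] at d2
    rw [hc3] at d1 d2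
    calc |(∑ t ∈ Finset.range (b + 1), (X t ω (i, w) : ℝ))
          - (∑ t ∈ Finset.range (a + 1), (X t ω (i, w) : ℝ))
          - ((b : ℝ) - (a : ℝ)) * μ0 (h, w)|
        = |((∑ t ∈ Finset.range (b + 1), (X t ω (i, w) : ℝ)) - ((b : ℝ) + 1) * μ0 (h, w))
            - ((∑ t ∈ Finset.range (a + 1), (X t ω (i, w) : ℝ)) - ((a : ℝ) + 1) * μ0 (h, w))| := by
          congr 1; ring
      _ ≤ |(∑ t ∈ Finset.range (b + 1), (X t ω (i, w) : ℝ)) - ((b : ℝ) + 1) * μ0 (h, w)|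
            + |(∑ t ∈ Finset.range (a + 1), (X t ω (i, w) : ℝ)) - ((a : ℝ) + 1) * μ0 (h, w)| :=
          abs_sub _ _
      _ ≤ δ * ((n : ℝ) + 1) + δ * ((n : ℝ) + 1) := add_le_add d1 d2
      _ = 2 * (δ * ((n : ℝ) + 1)) := by ring
  have hSdev : |(∑ t ∈ Finset.Ioc a b, ∑ i ∈ Finset.univ.filter (fun i : Fin NI => R0 i = h),
        (X t ω (i, w) : ℝ))
      - ((Finset.univ.filter (fun i : Fin NI => R0 i = h)).card : ℝ)
          * (((b : ℝ) - (a : ℝ)) * μ0 (h, w))|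
      ≤ ((Finset.univ.filter (fun i : Fin NI => R0 i = h)).card : ℝ)
          * (2 * (δ * ((n : ℝ) + 1))) := by
    rw [Finset.sum_comm]
    rw [show (∑ i ∈ Finset.univ.filter (fun i : Fin NI => R0 i = h),
          ∑ t ∈ Finset.Ioc a b, (X t ω (i, w) : ℝ))
        - ((Finset.univ.filter (fun i : Fin NI => R0 i = h)).card : ℝ)
            * (((b : ℝ) - (a : ℝ)) * μ0 (h, w))
      = ∑ i ∈ Finset.univ.filter (fun i : Fin NI => R0 i = h),
          ((∑ t ∈ Finset.Ioc a b, (X t ω (i, w) : ℝ))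
            - ((b : ℝ) - (a : ℝ)) * μ0 (h, w)) from by
        rw [Finset.sum_sub_distrib, Finset.sum_const, nsmul_eq_mul]]
    calc |∑ i ∈ Finset.univ.filter (fun i : Fin NI => R0 i = h),
          ((∑ t ∈ Finset.Ioc a b, (X t ω (i, w) : ℝ)) - ((b : ℝ) - (a : ℝ)) * μ0 (h, w))|
        ≤ ∑ i ∈ Finset.univ.filter (fun i : Fin NI => R0 i = h),
          |(∑ t ∈ Finset.Ioc a b, (X t ω (i, w) : ℝ)) - ((b : ℝ) - (a : ℝ)) * μ0 (h, w)| :=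
          Finset.abs_sum_le_sum_abs _ _
      _ ≤ ∑ _i ∈ Finset.univ.filter (fun i : Fin NI => R0 i = h), 2 * (δ * ((n : ℝ) + 1)) :=
          Finset.sum_le_sum hIoc
      _ = ((Finset.univ.filter (fun i : Fin NI => R0 i = h)).card : ℝ)
            * (2 * (δ * ((n : ℝ) + 1))) := by rw [Finset.sum_const, nsmul_eq_mul]
  -- bound on |M - μ0 (h,w)|
  have hMdev : |(∑ t ∈ Finset.Ioc a b, ∑ i ∈ Finset.univ.filter (fun i : Fin NI => R0 i = h),
        (X t ω (i, w) : ℝ))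
      / (((Finset.univ.filter (fun i : Fin NI => R0 i = h)).card : ℝ) * ((b - a : ℕ) : ℝ))
      - μ0 (h, w)| ≤ ε / 2 := by
    set K := ((Finset.univ.filter (fun i : Fin NI => R0 i = h)).card : ℝ) with hK
    set Sv := (∑ t ∈ Finset.Ioc a b, ∑ i ∈ Finset.univ.filter (fun i : Fin NI => R0 i = h),
        (X t ω (i, w) : ℝ)) with hSv
    rw [hTcast]
    have hKT' : (0 : ℝ) < K * ((b : ℝ) - (a : ℝ)) := mul_pos hK0R hTpos
    have habs : |Sv / (K * ((b : ℝ) - (a : ℝ))) - μ0 (h, w)| * (K * ((b : ℝ) - (a : ℝ)))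
        = |Sv - K * (((b : ℝ) - (a : ℝ)) * μ0 (h, w))| := by
      have e4 : (Sv / (K * ((b : ℝ) - (a : ℝ))) - μ0 (h, w)) * (K * ((b : ℝ) - (a : ℝ)))
          = Sv - K * (((b : ℝ) - (a : ℝ)) * μ0 (h, w)) := by
        field_simp
      rw [← e4, abs_mul, abs_of_pos hKT']
    have h9 : |Sv / (K * ((b : ℝ) - (a : ℝ))) - μ0 (h, w)|
        ≤ K * (2 * (δ * ((n : ℝ) + 1))) / (K * ((b : ℝ) - (a : ℝ))) := by
      rw [le_div_iff₀ hKT', habs]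
      exact hSdev
    have h10 : K * (2 * (δ * ((n : ℝ) + 1))) / (K * ((b : ℝ) - (a : ℝ)))
        = 2 * (δ * ((n : ℝ) + 1)) / ((b : ℝ) - (a : ℝ)) := by
      rw [mul_div_mul_left _ _ (ne_of_gt hK0R)]
    have h11 : 2 * (δ * ((n : ℝ) + 1)) / ((b : ℝ) - (a : ℝ)) ≤ ε / 2 := by
      rw [div_le_iff₀ hTpos]
      have hn1' : (n : ℝ) + 1 ≤ 2 * (n : ℝ) := by linarith
      have e2 : ε / 2 * ((b : ℝ) - (a : ℝ)) ≥ ε / 2 * ((n : ℝ) * epsnu / 2) := by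
        apply mul_le_mul_of_nonneg_left hT2 (by linarith)
      have e3 : ε / 2 * ((n : ℝ) * epsnu / 2) = 4 * (δ * (n : ℝ)) := by
        rw [hδdef]; ring
      nlinarith [hδ.le, hnR]
    exact (h9.trans_eq h10).trans h11
  -- conclude
  have hclamp0 : μ0 (h, w) = max Cd (min Cu (μ0 (h, w))) := by
    rw [min_eq_right (hA1 (h, w)).2, max_eq_right (hA1 (h, w)).1]
  rw [Pi.sub_apply, Real.norm_eq_abs]
  calc |μhat n q ω (h, w) - μ0 (h, w)|
      = |max Cd (min Cu
          ((∑ t ∈ Finset.Ioc a b, ∑ i ∈ Finset.univ.filter (fun i : Fin NI => R0 i = h),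
              (X t ω (i, w) : ℝ))
            / (((Finset.univ.filter (fun i : Fin NI => R0 i = h)).card : ℝ)
                * ((b - a : ℕ) : ℝ))))
          - max Cd (min Cu (μ0 (h, w)))| := by rw [← hμeq, ← hclamp0]
    _ ≤ |(∑ t ∈ Finset.Ioc a b, ∑ i ∈ Finset.univ.filter (fun i : Fin NI => R0 i = h),
              (X t ω (i, w) : ℝ))
            / (((Finset.univ.filter (fun i : Fin NI => R0 i = h)).card : ℝ)
                * ((b - a : ℕ) : ℝ)) - μ0 (h, w)| := my_clamp_lipschitz _ _ _ _
    _ ≤ ε / 2 := hMdev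
    _ ≤ ε := by linarith
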